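/- For all real constants f₁, f₂, κ₁, κ₂, the path x(t) = R(t)·(f₁ cos(t/2) + f₂ sin(t/2) − 1, −f₂ cos(t/2) + f₁ sin(t/2) − 1)ᵀ + (κ₁, κ₂)ᵀ satisfies x''(t) = R(t)·((−1/2, −1/2)ᵀ + M(t)·x'(t)) with M(t) = (((3/2)sin t, −(3/2)cos t), ((3/2)cos t, (3/2)sin t)), for all t ∈ ℝ. -/

import Mathlib

open Real

noncomputable def rot (t : ℝ) (p : ℝ × ℝ) : ℝ × ℝ :=
  (Real.cos t * p.1 - Real.sin t * p.2, Real.sin t * p.1 + Real.cos t * p.2)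

private lemma hcos2 (s : ℝ) : HasDerivAt (fun u : ℝ => Real.cos (u/2)) (-Real.sin (s/2) * (1/2)) s := by
  have h := (Real.hasDerivAt_cos (s/2)).comp s ((hasDerivAt_id s).div_const 2)
  exact h.congr_deriv (by ring)

private lemma hsin2 (s : ℝ) : HasDerivAt (fun u : ℝ => Real.sin (u/2)) (Real.cos (s/2) * (1/2)) s := by
  have h := (Real.hasDerivAt_sin (s/2)).comp s ((hasDerivAt_id s).div_const 2)
  exact h.congr_deriv (by ring)

private lemma hP1at (f₁ f₂ : ℝ) (s : ℝ) :
    HasDerivAt (fun u : ℝ => f₁ * Real.cos (u/2) + f₂ * Real.sin (u/2) - 1)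
      (f₁ * (-Real.sin (s/2) * (1/2)) + f₂ * (Real.cos (s/2) * (1/2))) s :=
  (((hcos2 s).const_mul f₁).add ((hsin2 s).const_mul f₂)).sub_const 1

private lemma hP2at (f₁ f₂ : ℝ) (s : ℝ) :
    HasDerivAt (fun u : ℝ => -f₂ * Real.cos (u/2) + f₁ * Real.sin (u/2) - 1)
      (-f₂ * (-Real.sin (s/2) * (1/2)) + f₁ * (Real.cos (s/2) * (1/2))) s :=
  (((hcos2 s).const_mul (-f₂)).add ((hsin2 s).const_mul f₁)).sub_const 1

private lemma hP1'at (f₁ f₂ : ℝ) (s : ℝ) :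
    HasDerivAt (fun u : ℝ => f₁ * (-Real.sin (u/2) * (1/2)) + f₂ * (Real.cos (u/2) * (1/2)))
      (-(f₁ * Real.cos (s/2) + f₂ * Real.sin (s/2)) / 4) s := by
  have h := ((((hsin2 s).neg.mul_const (1/2)).const_mul f₁).add
    (((hcos2 s).mul_const (1/2)).const_mul f₂))
  exact h.congr_deriv (by ring)

private lemma hP2'at (f₁ f₂ : ℝ) (s : ℝ) :
    HasDerivAt (fun u : ℝ => -f₂ * (-Real.sin (u/2) * (1/2)) + f₁ * (Real.cos (u/2) * (1/2)))
      ((f₂ * Real.cos (s/2) - f₁ * Real.sin (s/2)) / 4) s := by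
  have h := ((((hsin2 s).neg.mul_const (1/2)).const_mul (-f₂)).add
    (((hcos2 s).mul_const (1/2)).const_mul f₁))
  exact h.congr_deriv (by ring)

theorem stmt_11 (f₁ f₂ κ₁ κ₂ : ℝ) (x : ℝ → ℝ × ℝ)
    (hx : ∀ t : ℝ, x t =
      rot t (f₁ * cos (t/2) + f₂ * sin (t/2) - 1,
             -f₂ * cos (t/2) + f₁ * sin (t/2) - 1) + (κ₁, κ₂)) :
    ∀ t : ℝ,
      deriv (deriv x) t =
        rot t ((-1/2, -1/2) +
          ((3/2) * sin t * (deriv x t).1 - (3/2) * cos t * (deriv x t).2,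
           (3/2) * cos t * (deriv x t).1 + (3/2) * sin t * (deriv x t).2)) := by
  have hxf : x = fun s =>
      (Real.cos s * (f₁ * Real.cos (s/2) + f₂ * Real.sin (s/2) - 1)
        - Real.sin s * (-f₂ * Real.cos (s/2) + f₁ * Real.sin (s/2) - 1) + κ₁,
       Real.sin s * (f₁ * Real.cos (s/2) + f₂ * Real.sin (s/2) - 1)
        + Real.cos s * (-f₂ * Real.cos (s/2) + f₁ * Real.sin (s/2) - 1) + κ₂) := by
    funext s
    rw [hx s]
    rfl
  have hd1 : ∀ s : ℝ, HasDerivAt (fun u =>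
      Real.cos u * (f₁ * Real.cos (u/2) + f₂ * Real.sin (u/2) - 1)
        - Real.sin u * (-f₂ * Real.cos (u/2) + f₁ * Real.sin (u/2) - 1) + κ₁)
      (-Real.sin s * (f₁ * Real.cos (s/2) + f₂ * Real.sin (s/2) - 1)
        + Real.cos s * (f₁ * (-Real.sin (s/2) * (1/2)) + f₂ * (Real.cos (s/2) * (1/2)))
        - (Real.cos s * (-f₂ * Real.cos (s/2) + f₁ * Real.sin (s/2) - 1)
           + Real.sin s * (-f₂ * (-Real.sin (s/2) * (1/2)) + f₁ * (Real.cos (s/2) * (1/2))))) s := by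
    intro s
    have h := (((Real.hasDerivAt_cos s).mul (hP1at f₁ f₂ s)).sub
      ((Real.hasDerivAt_sin s).mul (hP2at f₁ f₂ s))).add_const κ₁
    exact h.congr_deriv (by ring)
  have hd2 : ∀ s : ℝ, HasDerivAt (fun u =>
      Real.sin u * (f₁ * Real.cos (u/2) + f₂ * Real.sin (u/2) - 1)
        + Real.cos u * (-f₂ * Real.cos (u/2) + f₁ * Real.sin (u/2) - 1) + κ₂)
      (Real.cos s * (f₁ * Real.cos (s/2) + f₂ * Real.sin (s/2) - 1)
        + Real.sin s * (f₁ * (-Real.sin (s/2) * (1/2)) + f₂ * (Real.cos (s/2) * (1/2)))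
        + (-Real.sin s * (-f₂ * Real.cos (s/2) + f₁ * Real.sin (s/2) - 1)
           + Real.cos s * (-f₂ * (-Real.sin (s/2) * (1/2)) + f₁ * (Real.cos (s/2) * (1/2))))) s := by
    intro s
    have h := (((Real.hasDerivAt_sin s).mul (hP1at f₁ f₂ s)).add
      ((Real.hasDerivAt_cos s).mul (hP2at f₁ f₂ s))).add_const κ₂
    exact h.congr_deriv (by ring)
  have hdx : deriv x = fun s =>
      (-Real.sin s * (f₁ * Real.cos (s/2) + f₂ * Real.sin (s/2) - 1)
        + Real.cos s * (f₁ * (-Real.sin (s/2) * (1/2)) + f₂ * (Real.cos (s/2) * (1/2)))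
        - (Real.cos s * (-f₂ * Real.cos (s/2) + f₁ * Real.sin (s/2) - 1)
           + Real.sin s * (-f₂ * (-Real.sin (s/2) * (1/2)) + f₁ * (Real.cos (s/2) * (1/2)))),
       Real.cos s * (f₁ * Real.cos (s/2) + f₂ * Real.sin (s/2) - 1)
        + Real.sin s * (f₁ * (-Real.sin (s/2) * (1/2)) + f₂ * (Real.cos (s/2) * (1/2)))
        + (-Real.sin s * (-f₂ * Real.cos (s/2) + f₁ * Real.sin (s/2) - 1)
           + Real.cos s * (-f₂ * (-Real.sin (s/2) * (1/2)) + f₁ * (Real.cos (s/2) * (1/2))))) := by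
    funext s
    rw [hxf]
    exact ((hd1 s).prodMk (hd2 s)).deriv
  intro t
  -- second derivative: derivatives of the two components of deriv x
  have hdd1 : HasDerivAt (fun s : ℝ =>
      -Real.sin s * (f₁ * Real.cos (s/2) + f₂ * Real.sin (s/2) - 1)
        + Real.cos s * (f₁ * (-Real.sin (s/2) * (1/2)) + f₂ * (Real.cos (s/2) * (1/2)))
        - (Real.cos s * (-f₂ * Real.cos (s/2) + f₁ * Real.sin (s/2) - 1)
           + Real.sin s * (-f₂ * (-Real.sin (s/2) * (1/2)) + f₁ * (Real.cos (s/2) * (1/2)))))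
      (-(Real.cos t * (f₁ * Real.cos (t/2) + f₂ * Real.sin (t/2) - 1))
        - 2 * (Real.sin t * (f₁ * (-Real.sin (t/2) * (1/2)) + f₂ * (Real.cos (t/2) * (1/2))))
        + Real.cos t * (-(f₁ * Real.cos (t/2) + f₂ * Real.sin (t/2)) / 4)
        + Real.sin t * (-f₂ * Real.cos (t/2) + f₁ * Real.sin (t/2) - 1)
        - 2 * (Real.cos t * (-f₂ * (-Real.sin (t/2) * (1/2)) + f₁ * (Real.cos (t/2) * (1/2))))
        - Real.sin t * ((f₂ * Real.cos (t/2) - f₁ * Real.sin (t/2)) / 4)) t := by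
    have h := ((((Real.hasDerivAt_sin t).neg.mul (hP1at f₁ f₂ t)).add
      ((Real.hasDerivAt_cos t).mul (hP1'at f₁ f₂ t))).sub
      (((Real.hasDerivAt_cos t).mul (hP2at f₁ f₂ t)).add
       ((Real.hasDerivAt_sin t).mul (hP2'at f₁ f₂ t))))
    exact h.congr_deriv (by simp only [Pi.neg_apply]; ring)
  have hdd2 : HasDerivAt (fun s : ℝ =>
      Real.cos s * (f₁ * Real.cos (s/2) + f₂ * Real.sin (s/2) - 1)
        + Real.sin s * (f₁ * (-Real.sin (s/2) * (1/2)) + f₂ * (Real.cos (s/2) * (1/2)))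
        + (-Real.sin s * (-f₂ * Real.cos (s/2) + f₁ * Real.sin (s/2) - 1)
           + Real.cos s * (-f₂ * (-Real.sin (s/2) * (1/2)) + f₁ * (Real.cos (s/2) * (1/2)))))
      (-(Real.sin t * (f₁ * Real.cos (t/2) + f₂ * Real.sin (t/2) - 1))
        + 2 * (Real.cos t * (f₁ * (-Real.sin (t/2) * (1/2)) + f₂ * (Real.cos (t/2) * (1/2))))
        + Real.sin t * (-(f₁ * Real.cos (t/2) + f₂ * Real.sin (t/2)) / 4)
        - Real.cos t * (-f₂ * Real.cos (t/2) + f₁ * Real.sin (t/2) - 1)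
        - 2 * (Real.sin t * (-f₂ * (-Real.sin (t/2) * (1/2)) + f₁ * (Real.cos (t/2) * (1/2))))
        + Real.cos t * ((f₂ * Real.cos (t/2) - f₁ * Real.sin (t/2)) / 4)) t := by
    have h := ((((Real.hasDerivAt_cos t).mul (hP1at f₁ f₂ t)).add
      ((Real.hasDerivAt_sin t).mul (hP1'at f₁ f₂ t))).add
      (((Real.hasDerivAt_sin t).neg.mul (hP2at f₁ f₂ t)).add
       ((Real.hasDerivAt_cos t).mul (hP2'at f₁ f₂ t))))
    exact h.congr_deriv (by simp only [Pi.neg_apply]; ring)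
  rw [hdx]
  rw [(hdd1.prodMk hdd2).deriv]
  have hs : Real.sin t = 2 * Real.sin (t/2) * Real.cos (t/2) := by
    have h1 := Real.sin_two_mul (t/2)
    rw [show 2 * (t/2) = t by ring] at h1
    linarith
  have hc : Real.cos t = Real.cos (t/2)^2 - Real.sin (t/2)^2 := by
    have h1 := Real.cos_two_mul (t/2)
    have h2 := Real.sin_sq_add_cos_sq (t/2)
    rw [show 2 * (t/2) = t by ring] at h1
    nlinarith [h1, h2]
  simp only [rot, Prod.mk_add_mk, Prod.mk.injEq]
  constructor
  · rw [hs, hc]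
    linear_combination ((-3/2:ℝ)*Real.cos (t/2)^2 + (9/4:ℝ)*Real.cos (t/2)^3*f₁ + (-3/2:ℝ)*Real.cos (t/2)^4 + (9/4:ℝ)*Real.cos (t/2)^5*f₁ + (3:ℝ)*Real.sin (t/2)*Real.cos (t/2) + (27/4:ℝ)*Real.sin (t/2)*Real.cos (t/2)^2*f₂ + (3:ℝ)*Real.sin (t/2)*Real.cos (t/2)^3 + (27/4:ℝ)*Real.sin (t/2)*Real.cos (t/2)^4*f₂ + (3/2:ℝ)*Real.sin (t/2)^2 + (-27/4:ℝ)*Real.sin (t/2)^2*Real.cos (t/2)*f₁ + (-9/2:ℝ)*Real.sin (t/2)^2*Real.cos (t/2)^3*f₁ + (-9/4:ℝ)*Real.sin (t/2)^3*f₂ + (3:ℝ)*Real.sin (t/2)^3*Real.cos (t/2) + (9/2:ℝ)*Real.sin (t/2)^3*Real.cos (t/2)^2*f₂ + (3/2:ℝ)*Real.sin (t/2)^4 + (-27/4:ℝ)*Real.sin (t/2)^4*Real.cos (t/2)*f₁ + (-9/4:ℝ)*Real.sin (t/2)^5*f₂) * (Real.sin_sq_add_cos_sq (t/2))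
  · rw [hs, hc]
    linear_combination ((-3/2:ℝ)*Real.cos (t/2)^2 + (-9/4:ℝ)*Real.cos (t/2)^3*f₂ + (-3/2:ℝ)*Real.cos (t/2)^4 + (-9/4:ℝ)*Real.cos (t/2)^5*f₂ + (-3:ℝ)*Real.sin (t/2)*Real.cos (t/2) + (27/4:ℝ)*Real.sin (t/2)*Real.cos (t/2)^2*f₁ + (-3:ℝ)*Real.sin (t/2)*Real.cos (t/2)^3 + (27/4:ℝ)*Real.sin (t/2)*Real.cos (t/2)^4*f₁ + (3/2:ℝ)*Real.sin (t/2)^2 + (27/4:ℝ)*Real.sin (t/2)^2*Real.cos (t/2)*f₂ + (9/2:ℝ)*Real.sin (t/2)^2*Real.cos (t/2)^3*f₂ + (-9/4:ℝ)*Real.sin (t/2)^3*f₁ + (-3:ℝ)*Real.sin (t/2)^3*Real.cos (t/2) + (9/2:ℝ)*Real.sin (t/2)^3*Real.cos (t/2)^2*f₁ + (3/2:ℝ)*Real.sin (t/2)^4 + (27/4:ℝ)*Real.sin (t/2)^4*Real.cos (t/2)*f₂ + (-9/4:ℝ)*Real.sin (t/2)^5*f₁) * (Real.sin_sq_add_cos_sq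 (t/2))
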